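/- Let c₁, …, c_k : [0,1] → ℝ_{>0} be positive affine functions and c_p(λ) = 1/(Σ_e 1/c_e(λ)). If c_p''(λ̄) = 0 for some λ̄ ∈ (0,1), then c_p is affine on (0,1). -/

import Mathlib

open Set

theorem stmt_5 (k : ℕ) (c : Fin k → ℝ → ℝ) (a b : Fin k → ℝ)
    (haffine : ∀ e, ∀ l : ℝ, c e l = a e + b e * l)
    (hpos : ∀ e, ∀ l ∈ Icc (0 : ℝ) 1, 0 < c e l)
    (lbar : ℝ) (hlbar : lbar ∈ Ioo (0 : ℝ) 1)
    (hsecond : deriv (deriv (fun l => 1 / (∑ e, 1 / c e l))) lbar = 0) :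
    ∃ A B : ℝ, ∀ l ∈ Ioo (0 : ℝ) 1, 1 / (∑ e, 1 / c e l) = A + B * l := by
  have hc : c = fun e l => a e + b e * l := funext fun e => funext fun l => haffine e l
  subst hc
  simp only at hpos hsecond ⊢
  rcases Nat.eq_zero_or_pos k with hk | hk
  · subst hk
    exact ⟨0, 0, fun l hl => by simp⟩
  obtain ⟨lt0, lt1⟩ := hlbar
  have hmem : lbar ∈ Icc (0:ℝ) 1 := ⟨lt0.le, lt1.le⟩
  -- notation
  set W : ℝ → Fin k → ℝ := fun l e => (a e + b e * l)⁻¹ with hWdef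
  set sf : ℝ → ℝ := fun l => ∑ e, W l e with hsdef
  set Nf : ℝ → ℝ := fun l => ∑ e, b e * (W l e)^2 with hNdef
  set G : ℝ → ℝ := fun l => Nf l / (sf l)^2 with hGdef
  have hcpos : ∀ e, ∀ l ∈ Icc (0:ℝ) 1, 0 < a e + b e * l := hpos
  have hcne : ∀ e, ∀ l ∈ Icc (0:ℝ) 1, a e + b e * l ≠ 0 :=
    fun e l hl => (hcpos e l hl).ne'
  have hspos : ∀ l ∈ Icc (0:ℝ) 1, 0 < sf l := by
    intro l hl
    have : Nonempty (Fin k) := ⟨⟨0, hk⟩⟩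
    apply Finset.sum_pos (fun e _ => inv_pos.mpr (hcpos e l hl))
    exact Finset.univ_nonempty
  -- derivative of affine part
  have hce : ∀ e, ∀ l : ℝ, HasDerivAt (fun l => a e + b e * l) (b e) l := by
    intro e l
    simpa using ((hasDerivAt_id l).const_mul (b e)).const_add (a e)
  have hW : ∀ e, ∀ l ∈ Icc (0:ℝ) 1,
      HasDerivAt (fun l => W l e) (-(b e) * (W l e)^2) l := by
    intro e l hl
    have := (hce e l).fun_inv (hcne e l hl)
    simpa [hWdef, div_eq_mul_inv, inv_pow, neg_mul, mul_comm] using this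
  have hs : ∀ l ∈ Icc (0:ℝ) 1, HasDerivAt sf (-(Nf l)) l := by
    intro l hl
    have := HasDerivAt.fun_sum (u := Finset.univ) (A := fun e l => W l e) (A' := fun e => -(b e) * (W l e)^2) (fun e _ => hW e l hl)
    simpa [hsdef, hNdef, ← Finset.sum_neg_distrib, neg_mul, mul_comm, mul_assoc] using this
  -- first derivative of F on Ioo
  have hF : ∀ l ∈ Ioo (0:ℝ) 1,
      HasDerivAt (fun l => 1 / (∑ e, 1 / (a e + b e * l))) (G l) l := by
    intro l hl
    have hl' : l ∈ Icc (0:ℝ) 1 := ⟨hl.1.le, hl.2.le⟩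
    have h1 := (hs l hl').fun_inv (hspos l hl').ne'
    have h2 : -(-(Nf l)) / sf l ^ 2 = G l := by rw [hGdef]; ring
    rw [h2] at h1
    simpa [hsdef, hWdef, one_div] using h1
  -- second derivative at lbar
  have hN' : HasDerivAt Nf (∑ e, b e * (2 * W lbar e ^ 1 * (-(b e) * (W lbar e)^2))) lbar := by
    apply HasDerivAt.fun_sum
    intro e _
    exact ((hW e lbar hmem).pow 2).const_mul (b e)
  have hD : HasDerivAt (fun l => (sf l)^2) (2 * sf lbar ^ 1 * (-(Nf lbar))) lbar :=
    (hs lbar hmem).pow 2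
  have hsne : sf lbar ≠ 0 := (hspos lbar hmem).ne'
  have hG' := hN'.fun_div hD (pow_ne_zero 2 hsne)
  -- relate to hsecond
  have hev : deriv (fun l => 1 / (∑ e, 1 / (a e + b e * l))) =ᶠ[nhds lbar] G := by
    filter_upwards [Ioo_mem_nhds lt0 lt1] with l hl
    exact (hF l hl).deriv
  have hd2 : deriv G lbar = 0 := by
    rw [← hev.deriv_eq]
    exact hsecond
  have hval := hG'.deriv
  rw [hd2] at hval
  -- turn into algebraic identity
  set Q : ℝ := ∑ e, (b e)^2 * (W lbar e)^3 with hQdef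
  have hN'val : (∑ e, b e * (2 * W lbar e ^ 1 * (-(b e) * (W lbar e)^2))) = -2 * Q := by
    rw [hQdef, Finset.mul_sum]
    apply Finset.sum_congr rfl
    intro e _
    ring
  rw [hN'val] at hval
  have hkey : (Nf lbar)^2 = Q * sf lbar := by
    have hnum : -2 * Q * sf lbar ^ 2 - Nf lbar * (2 * sf lbar ^ 1 * -Nf lbar) = 0 := by
      have := div_eq_zero_iff.mp hval.symm
      rcases this with h | h
      · exact h
      · exact absurd h (pow_ne_zero 2 (pow_ne_zero 2 hsne))
    have hs0 := hspos lbar hmem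
    nlinarith [hs0]
  -- equality case: all ratios equal
  set t : ℝ := Nf lbar / sf lbar with htdef
  have hzero : ∑ e, W lbar e * (b e * W lbar e - t)^2 = 0 := by
    have hexp : ∑ e, W lbar e * (b e * W lbar e - t)^2
        = Q - 2 * t * Nf lbar + t^2 * sf lbar := by
      rw [hQdef, hNdef, hsdef, Finset.mul_sum, Finset.mul_sum, ← Finset.sum_sub_distrib,
        ← Finset.sum_add_distrib]
      apply Finset.sum_congr rfl
      intro e _
      ring
    rw [hexp, htdef]
    field_simp
    nlinarith [hkey]
  have hrat : ∀ e, b e * W lbar e = t := by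
    intro e
    have hnn : ∀ e ∈ Finset.univ, (0:ℝ) ≤ W lbar e * (b e * W lbar e - t)^2 := by
      intro e _
      have : 0 < W lbar e := inv_pos.mpr (hcpos e lbar hmem)
      positivity
    have := (Finset.sum_eq_zero_iff_of_nonneg hnn).mp hzero e (Finset.mem_univ e)
    have hW0 : 0 < W lbar e := inv_pos.mpr (hcpos e lbar hmem)
    have h2 : (b e * W lbar e - t)^2 = 0 := by
      rcases mul_eq_zero.mp this with h | h
      · exact absurd h hW0.ne'
      · exact h
    have := pow_eq_zero_iff (n := 2) (by norm_num) |>.mp h2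
    linarith
  have hb : ∀ e, b e = t * (a e + b e * lbar) := by
    intro e
    have h := hrat e
    have hne := hcne e lbar hmem
    rw [hWdef] at h
    field_simp at h
    linarith [h]
  -- conclusion
  refine ⟨(1 - t * lbar) / sf lbar, t / sf lbar, fun l hl => ?_⟩
  have hl' : l ∈ Icc (0:ℝ) 1 := ⟨hl.1.le, hl.2.le⟩
  set m : ℝ := 1 + t * (l - lbar) with hmdef
  have hform : ∀ e, a e + b e * l = (a e + b e * lbar) * m := by
    intro e
    have := hb e
    rw [hmdef]
    linear_combination (l - lbar) * this
  have e0 : Fin k := ⟨0, hk⟩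
  have hmpos : 0 < m := by
    have h1 := hcpos e0 l hl'
    rw [hform e0] at h1
    have h2 := hcpos e0 lbar hmem
    nlinarith
  have hsum : ∑ e, 1 / (a e + b e * l) = m⁻¹ * sf lbar := by
    rw [hsdef, Finset.mul_sum]
    apply Finset.sum_congr rfl
    intro e _
    rw [hform e, hWdef, one_div, mul_inv]
    ring
  rw [hsum]
  have hs0 := hspos lbar hmem
  rw [hmdef]
  field_simp
  ring
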